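/- arXiv:1810.13363 — 2 statements merged into one kernel-verified Lean document; each statement's English description precedes it below -/
import Mathlib

section
/- Let d ≥ 1 and let p be a prime that is not d-exceptional. Then for every α ∈ 𝔽_p there is at most one D ∈ I_d such that D(α) = 0 in 𝔽_p (reducing D mod p); moreover, if D ∈ I_d satisfies D(α) = 0 in 𝔽_p and β ∈ ℂ is a root of D, then for all P, Q ∈ S_d one has P(α) = Q(α) in 𝔽_p if and only if P(β) = Q(β) in ℂ. -/
open Polynomial Filter Asymptotics NumberField

noncomputable section

/-- `S_d`: polynomials of degree at most `d` with coefficients in `{0,1}`. -/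
def SdPolys (d : ℕ) : Set (Polynomial ℤ) :=
  {P | P.natDegree ≤ d ∧ ∀ i, P.coeff i = 0 ∨ P.coeff i = 1}

/-- `S_d(x)`: values at `x` of polynomials of degree at most `d` with coefficients in
`{0,1}`. -/
def Svals {R : Type*} [CommRing R] (d : ℕ) (x : R) : Set R :=
  {y | ∃ P : Polynomial ℤ, P.natDegree ≤ d ∧ (∀ i, P.coeff i = 0 ∨ P.coeff i = 1) ∧
    Polynomial.aeval x P = y}

/-- `S_d^K(x)`: values at `x` of polynomials of degree at most `d` with integer
coefficients in `[-K, K]`. -/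
def SKvals {R : Type*} [CommRing R] (d K : ℕ) (x : R) : Set R :=
  {y | ∃ P : Polynomial ℤ, P.natDegree ≤ d ∧ (∀ i, |P.coeff i| ≤ (K : ℤ)) ∧
    Polynomial.aeval x P = y}

/-- Mahler measure of a complex polynomial: `|a₀| ∏ max 1 |αᵢ|` over its complex roots
(with multiplicity). -/
def mahlerPoly (P : Polynomial ℂ) : ℝ :=
  ‖P.leadingCoeff‖ * (P.roots.map (fun z => max 1 ‖z‖)).prod

/-- The minimal polynomial over `ℤ` of a complex number: the primitive part of the
denominator-cleared minimal polynomial over `ℚ`. -/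
def intMinpoly (α : ℂ) : Polynomial ℤ :=
  (IsLocalization.integerNormalization (nonZeroDivisors ℤ) (minpoly ℚ α)).primPart

/-- Mahler measure `M(α)` of an algebraic number `α`. -/
def mahlerNum (α : ℂ) : ℝ := mahlerPoly ((intMinpoly α).map (Int.castRingHom ℂ))

/-- Lehmer's conjecture: there is `c₀ > 0` with `M(α) > 1 + c₀` for every algebraic
number `α` that is not a root of unity. -/
def LehmerConjecture : Prop :=
  ∃ c₀ : ℝ, 0 < c₀ ∧ ∀ α : ℂ, IsAlgebraic ℚ α →
    (∀ n : ℕ, 0 < n → α ^ n ≠ 1) → 1 + c₀ < mahlerNum α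

/-- A prime `p` is `C`-wild if there is `x ∈ 𝔽_p^×` of multiplicative order at least
`(log₂ p)²` such that not every element of `𝔽_p` is a sum of at most `(log₂ p)^C`
elements (with repetitions allowed) of `{x, x², …, x^⌊C log₂ p⌋}`. -/
def CWild (C : ℝ) (p : ℕ) : Prop :=
  ∃ x : (ZMod p)ˣ, (Real.logb 2 p) ^ 2 ≤ (orderOf x : ℝ) ∧
    ¬ (∀ y : ZMod p, ∃ m : ℕ → ℕ,
        ((∑ i ∈ Finset.Icc 1 ⌊C * Real.logb 2 p⌋₊, m i : ℕ) : ℝ) ≤ (Real.logb 2 p) ^ C ∧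
        y = ∑ i ∈ Finset.Icc 1 ⌊C * Real.logb 2 p⌋₊, (m i) • ((x : ZMod p) ^ i))

/-- A prime `p` is `δ`-bad if there is a nonzero `x` mod `p` of multiplicative order at
least `(log₂ p)(log₂ log₂ log₂ p)` with `|S_d(x)| ≤ p^δ` for all `d ≤ log₂ p`. -/
def DeltaBad (δ : ℝ) (p : ℕ) : Prop :=
  ∃ x : ZMod p, x ≠ 0 ∧
    Real.logb 2 p * Real.logb 2 (Real.logb 2 (Real.logb 2 p)) ≤ (orderOf x : ℝ) ∧
    ∀ d : ℕ, (d : ℝ) ≤ Real.logb 2 p → ((Svals d x).ncard : ℝ) ≤ (p : ℝ) ^ δ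

/-- A prime `p` is `(δ,ε)`-very bad if there is a nonzero `x` mod `p` of multiplicative
order at least `√(p / log₂ p)` with `|S_d^K(x)| ≤ p^δ` for all `d ≤ (1/δ) log₂ p` and
all `K ≤ 2^(εd)`. -/
def VeryBad (δ ε : ℝ) (p : ℕ) : Prop :=
  ∃ x : ZMod p, x ≠ 0 ∧
    Real.sqrt (p / Real.logb 2 p) ≤ (orderOf x : ℝ) ∧
    ∀ d K : ℕ, (d : ℝ) ≤ (1 / δ) * Real.logb 2 p → (K : ℝ) ≤ 2 ^ (ε * d) →
      ((SKvals d K x).ncard : ℝ) ≤ (p : ℝ) ^ δ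

/-- The number of primes up to `X`. -/
def primesUpTo (X : ℕ) : ℕ := {p : ℕ | p ≤ X ∧ p.Prime}.ncard

/-- The number of primes up to `X` satisfying a property `Q`. -/
def primesUpToWith (Q : ℕ → Prop) (X : ℕ) : ℕ := {p : ℕ | p ≤ X ∧ p.Prime ∧ Q p}.ncard

/-- `P_d`: polynomials of degree at most `d` with coefficients in `{-1,0,1}`. -/
def PdPolys (d : ℕ) : Set (Polynomial ℤ) :=
  {P | P.natDegree ≤ d ∧ ∀ i, P.coeff i = 0 ∨ P.coeff i = 1 ∨ P.coeff i = -1}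

/-- `I_d`: monic polynomials, irreducible over `ℚ`, dividing at least one nonzero
element of `P_d`. -/
def IdPolys (d : ℕ) : Set (Polynomial ℤ) :=
  {D | D.Monic ∧ Irreducible (D.map (Int.castRingHom ℚ)) ∧ ∃ P ∈ PdPolys d, P ≠ 0 ∧ D ∣ P}

/-- The Sylvester matrix of two integer polynomials. -/
def sylvester (f g : Polynomial ℤ) :
    Matrix (Fin (g.natDegree + f.natDegree)) (Fin (g.natDegree + f.natDegree)) ℤ :=
  Matrix.of fun i j =>
    if (i : ℕ) < g.natDegree then
      (if (i : ℕ) ≤ (j : ℕ) ∧ (j : ℕ) ≤ (i : ℕ) + f.natDegree then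
        f.coeff (f.natDegree + (i : ℕ) - (j : ℕ)) else 0)
    else
      (if (i : ℕ) - g.natDegree ≤ (j : ℕ) ∧ (j : ℕ) ≤ (i : ℕ) - g.natDegree + g.natDegree then
        g.coeff (g.natDegree + ((i : ℕ) - g.natDegree) - (j : ℕ)) else 0)

/-- The resultant of two integer polynomials, as the determinant of their Sylvester
matrix. -/
def resultantZ (f g : Polynomial ℤ) : ℤ := (_root_.sylvester f g).det

/-- A prime `p` is `d`-exceptional if it divides the resultant of a pair of distinct
elements of `I_d`. -/
def DExceptional (d p : ℕ) : Prop :=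
  ∃ D₁ ∈ IdPolys d, ∃ D₂ ∈ IdPolys d, D₁ ≠ D₂ ∧ (p : ℤ) ∣ resultantZ D₁ D₂

/-- The `ℓ¹`-norm of the coefficients of an integer polynomial. -/
def l1normZ (P : Polynomial ℤ) : ℝ :=
  ∑ i ∈ Finset.range (P.natDegree + 1), |(P.coeff i : ℝ)|

/-- The `ℓ²`-norm of the coefficients of an integer polynomial. -/
def l2normZ (P : Polynomial ℤ) : ℝ :=
  Real.sqrt (∑ i ∈ Finset.range (P.natDegree + 1), (P.coeff i : ℝ) ^ 2)

/-- The `ℓ¹`-norm of the coefficients of a complex polynomial. -/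
def l1normC (P : Polynomial ℂ) : ℝ :=
  ∑ i ∈ Finset.range (P.natDegree + 1), ‖P.coeff i‖


section Aux

open Polynomial

variable {p : ℕ} [Fact p.Prime]

/-- A row of the Sylvester matrix dotted with the vector of powers of a common root
vanishes. -/
lemma rowZero (α : ZMod p) (h : Polynomial ℤ) (hh : Polynomial.aeval α h = 0)
    (a N : ℕ) (haN : a + h.natDegree < N) :
    ∑ j ∈ Finset.range N,
      (((if a ≤ j ∧ j ≤ a + h.natDegree then h.coeff (h.natDegree + a - j) else 0 : ℤ)) : ZMod p)
        * α ^ (N - 1 - j) = 0 := by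
  set e := h.natDegree with he
  have h1 : ∀ j ∈ Finset.range N,
      (((if a ≤ j ∧ j ≤ a + e then h.coeff (e + a - j) else 0 : ℤ)) : ZMod p) * α ^ (N - 1 - j)
      = if a ≤ j ∧ j ≤ a + e then (h.coeff (e + a - j) : ZMod p) * α ^ (N - 1 - j) else 0 := by
    intro j _; split_ifs <;> simp
  rw [Finset.sum_congr rfl h1, ← Finset.sum_filter]
  have h2 : (Finset.range N).filter (fun j => a ≤ j ∧ j ≤ a + e) = Finset.Ico a (a + e + 1) := by
    ext j
    simp only [Finset.mem_filter, Finset.mem_range, Finset.mem_Ico]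
    omega
  rw [h2, Finset.sum_Ico_eq_sum_range]
  have h3 : a + e + 1 - a = e + 1 := by omega
  rw [h3]
  have h4 : ∀ k ∈ Finset.range (e + 1),
      (h.coeff (e + a - (a + k)) : ZMod p) * α ^ (N - 1 - (a + k))
        = (fun k => (h.coeff (e - k) : ZMod p) * α ^ (N - 1 - a - k)) k := by
    intro k _
    simp only
    have h4a : e + a - (a + k) = e - k := by omega
    have h4b : N - 1 - (a + k) = N - 1 - a - k := by omega
    rw [h4a, h4b]
  rw [Finset.sum_congr rfl h4]
  rw [← Finset.sum_range_reflect (fun k => (h.coeff (e - k) : ZMod p) * α ^ (N - 1 - a - k)) (e + 1)]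
  have h5 : ∀ k ∈ Finset.range (e + 1),
      (fun k => (h.coeff (e - k) : ZMod p) * α ^ (N - 1 - a - k)) (e + 1 - 1 - k)
        = α ^ (N - 1 - a - e) * ((h.coeff k : ZMod p) * α ^ k) := by
    intro k hk
    simp only [Finset.mem_range] at hk
    simp only
    have h6 : e - (e + 1 - 1 - k) = k := by omega
    have h7 : N - 1 - a - (e + 1 - 1 - k) = (N - 1 - a - e) + k := by omega
    rw [h6, h7, pow_add]
    ring
  rw [Finset.sum_congr rfl h5, ← Finset.mul_sum]
  have h8 : ∑ k ∈ Finset.range (e + 1), (h.coeff k : ZMod p) * α ^ k = Polynomial.aeval α h := by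
    rw [Polynomial.aeval_eq_sum_range]
    exact Finset.sum_congr rfl fun k _ => by rw [zsmul_eq_mul]
  rw [h8, hh, mul_zero]

/-- If `f` and `g` have a common root mod `p`, then `p` divides their resultant. -/
lemma resultant_dvd_of_common_root (α : ZMod p) (f g : Polynomial ℤ)
    (hf : Polynomial.aeval α f = 0) (hg : Polynomial.aeval α g = 0)
    (hN : 0 < g.natDegree + f.natDegree) :
    (p : ℤ) ∣ resultantZ f g := by
  rw [← ZMod.intCast_zmod_eq_zero_iff_dvd]
  have hcast : ((resultantZ f g : ℤ) : ZMod p)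
      = ((_root_.sylvester f g).map (Int.castRingHom (ZMod p))).det := by
    rw [resultantZ]
    exact (RingHom.map_det (Int.castRingHom (ZMod p)) (_root_.sylvester f g)).trans
      (by rw [RingHom.mapMatrix_apply])
  rw [hcast]
  set N := g.natDegree + f.natDegree with hNdef
  refine Matrix.exists_mulVec_eq_zero_iff.mp
    ⟨fun j : Fin N => α ^ (N - 1 - (j : ℕ)), ?_, ?_⟩
  · intro hv
    have h1 : α ^ (N - 1 - ((⟨N - 1, by omega⟩ : Fin N) : ℕ)) = 0 := congrFun hv _
    simp only [Nat.sub_self, pow_zero] at h1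
    exact one_ne_zero h1
  · funext i
    have hiN : (i : ℕ) < N := i.isLt
    show ∑ j : Fin N, ((_root_.sylvester f g).map (Int.castRingHom (ZMod p))) i j
        * α ^ (N - 1 - (j : ℕ)) = 0
    have hentry : ∀ j : Fin N,
        ((_root_.sylvester f g).map (Int.castRingHom (ZMod p))) i j * α ^ (N - 1 - (j : ℕ))
        = (fun j' : ℕ =>
            (((if (i : ℕ) < g.natDegree then
                (if (i : ℕ) ≤ j' ∧ j' ≤ (i : ℕ) + f.natDegree then
                  f.coeff (f.natDegree + (i : ℕ) - j') else 0)
              else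
                (if (i : ℕ) - g.natDegree ≤ j' ∧
                    j' ≤ (i : ℕ) - g.natDegree + g.natDegree then
                  g.coeff (g.natDegree + ((i : ℕ) - g.natDegree) - j') else 0) : ℤ)) : ZMod p)
            * α ^ (N - 1 - j')) (j : ℕ) := by
      intro j
      simp only [Matrix.map_apply, _root_.sylvester, Matrix.of_apply, eq_intCast]
    set F : ℕ → ZMod p := fun j' =>
      (((if (i : ℕ) < g.natDegree then
            (if (i : ℕ) ≤ j' ∧ j' ≤ (i : ℕ) + f.natDegree then
              f.coeff (f.natDegree + (i : ℕ) - j') else 0)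
          else
            (if (i : ℕ) - g.natDegree ≤ j' ∧
                j' ≤ (i : ℕ) - g.natDegree + g.natDegree then
              g.coeff (g.natDegree + ((i : ℕ) - g.natDegree) - j') else 0) : ℤ)) : ZMod p)
        * α ^ (N - 1 - j') with hF
    have hsum : ∑ j : Fin N, ((_root_.sylvester f g).map (Int.castRingHom (ZMod p))) i j
        * α ^ (N - 1 - (j : ℕ)) = ∑ j ∈ Finset.range N, F j := by
      rw [← Fin.sum_univ_eq_sum_range F N]
      exact Finset.sum_congr rfl fun j _ => hentry j
    rw [hsum, hF]
    simp only
    by_cases hi : (i : ℕ) < g.natDegree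
    · simp only [if_pos hi]
      exact rowZero α f hf (i : ℕ) N (by omega)
    · simp only [if_neg hi]
      push_neg at hi
      exact rowZero α g hg ((i : ℕ) - g.natDegree) N (by omega)

/-- Every monic integer polynomial vanishing at `α` mod `p` has a monic
`ℚ`-irreducible factor vanishing at `α` mod `p`. -/
lemma exists_irreducible_factor_root (α : ZMod p) :
    ∀ N : ℕ, ∀ R : Polynomial ℤ, R.natDegree ≤ N → R.Monic → Polynomial.aeval α R = 0 →
      ∃ D : Polynomial ℤ, D.Monic ∧ Irreducible (D.map (Int.castRingHom ℚ)) ∧ D ∣ R ∧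
        Polynomial.aeval α D = 0 := by
  intro N
  induction N with
  | zero =>
    intro R hdeg hmon hev
    exfalso
    have h0 : R = 1 := hmon.natDegree_eq_zero.mp (Nat.le_zero.mp hdeg)
    rw [h0, map_one] at hev
    exact one_ne_zero hev
  | succ N ih =>
    intro R hdeg hmon hev
    have h0 : R.natDegree ≠ 0 := by
      intro h0
      have h1 : R = 1 := hmon.natDegree_eq_zero.mp h0
      rw [h1, map_one] at hev
      exact one_ne_zero hev
    -- find a complex root
    have hdegC : 0 < (R.map (Int.castRingHom ℂ)).degree := by
      rw [Polynomial.degree_map_eq_of_injective Int.cast_injective]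
      exact Polynomial.natDegree_pos_iff_degree_pos.mp (Nat.pos_of_ne_zero h0)
    obtain ⟨β, hβ⟩ := Complex.exists_root hdegC
    have hβR : Polynomial.aeval β R = 0 := by
      rw [Polynomial.aeval_def, Polynomial.eval₂_eq_eval_map, algebraMap_int_eq]
      exact hβ
    have hint : IsIntegral ℤ β := ⟨R, hmon, by rwa [← Polynomial.aeval_def]⟩
    set D := minpoly ℤ β with hDdef
    have hDmon : D.Monic := minpoly.monic hint
    have hDirr : Irreducible (D.map (Int.castRingHom ℚ)) := by
      rw [← algebraMap_int_eq, ← minpoly.isIntegrallyClosed_eq_field_fractions' ℚ hint]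
      exact minpoly.irreducible (hint.tower_top)
    have hDdvd : D ∣ R := minpoly.isIntegrallyClosed_dvd hint hβR
    obtain ⟨R₁, hR₁⟩ := hDdvd
    have hR₁mon : R₁.Monic := hDmon.of_mul_monic_left (hR₁ ▸ hmon)
    have hsplit : Polynomial.aeval α D * Polynomial.aeval α R₁ = 0 := by
      rw [← map_mul, ← hR₁, hev]
    rcases mul_eq_zero.mp hsplit with hDα | hR₁α
    · exact ⟨D, hDmon, hDirr, ⟨R₁, hR₁⟩, hDα⟩
    · have hDpos : 0 < D.natDegree := minpoly.natDegree_pos hint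
      have hdeg' : R₁.natDegree ≤ N := by
        have hmul : R.natDegree = D.natDegree + R₁.natDegree := by
          rw [hR₁]
          exact Polynomial.natDegree_mul hDmon.ne_zero hR₁mon.ne_zero
        omega
      obtain ⟨D', hD'mon, hD'irr, hD'dvd, hD'α⟩ := ih R₁ hdeg' hR₁mon hR₁α
      exact ⟨D', hD'mon, hD'irr, hD'dvd.trans ⟨D, by rw [hR₁, mul_comm]⟩, hD'α⟩

end Aux

end
/-- **Claim 1.** Let `d ≥ 1` and let `p` be a prime that is not `d`-exceptional. Then
every `α ∈ 𝔽_p` is a root of at most one `D ∈ I_d` (reduced mod `p`); moreover, if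
`D ∈ I_d` satisfies `D(α) = 0` in `𝔽_p` and `β ∈ ℂ` is a root of `D`, then for all
`P, Q ∈ S_d` one has `P(α) = Q(α)` in `𝔽_p` iff `P(β) = Q(β)` in `ℂ`. -/
theorem unique_Id_root_and_partition_eq (d : ℕ) (hd : 1 ≤ d) (p : ℕ) (hp : p.Prime)
    (hexc : ¬ DExceptional d p) :
    (∀ α : ZMod p, ∀ D₁ ∈ IdPolys d, ∀ D₂ ∈ IdPolys d,
        Polynomial.aeval α D₁ = 0 → Polynomial.aeval α D₂ = 0 → D₁ = D₂) ∧
    (∀ D ∈ IdPolys d, ∀ α : ZMod p, Polynomial.aeval α D = 0 →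
      ∀ β : ℂ, Polynomial.aeval β D = 0 →
        ∀ P ∈ SdPolys d, ∀ Q ∈ SdPolys d,
          (Polynomial.aeval α P = Polynomial.aeval α Q ↔
            Polynomial.aeval β P = Polynomial.aeval β Q)) := by
  haveI : Fact p.Prime := ⟨hp⟩
  have ndpos : ∀ D ∈ IdPolys d, ∀ α : ZMod p, Polynomial.aeval α D = 0 → 0 < D.natDegree := by
    intro D hD α hα
    rcases Nat.eq_zero_or_pos D.natDegree with h0 | h0
    · exfalso
      have h1 : D = 1 := hD.1.natDegree_eq_zero.mp h0
      rw [h1, map_one] at hα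
      exact one_ne_zero hα
    · exact h0
  have part1 : ∀ α : ZMod p, ∀ D₁ ∈ IdPolys d, ∀ D₂ ∈ IdPolys d,
      Polynomial.aeval α D₁ = 0 → Polynomial.aeval α D₂ = 0 → D₁ = D₂ := by
    intro α D₁ h₁ D₂ h₂ e₁ e₂
    by_contra hne
    exact hexc ⟨D₁, h₁, D₂, h₂, hne,
      resultant_dvd_of_common_root α D₁ D₂ e₁ e₂
        (by have := ndpos D₂ h₂ α e₂; omega)⟩
  refine ⟨part1, ?_⟩
  intro D hD α hDα β hDβ P hP Q hQ
  set R := P - Q with hRdef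
  have hRdeg : R.natDegree ≤ d :=
    le_trans (Polynomial.natDegree_sub_le P Q) (max_le hP.1 hQ.1)
  have hRcoeff : ∀ i, R.coeff i = 0 ∨ R.coeff i = 1 ∨ R.coeff i = -1 := by
    intro i
    rw [hRdef, Polynomial.coeff_sub]
    rcases hP.2 i with h1 | h1 <;> rcases hQ.2 i with h2 | h2 <;> rw [h1, h2] <;> norm_num
  -- key divisibility fact in each direction
  constructor
  · -- P(α) = Q(α) → P(β) = Q(β)
    intro hα
    by_cases hR0 : R = 0
    · have : P = Q := by rwa [hRdef, sub_eq_zero] at hR0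
      rw [this]
    · have hRα : Polynomial.aeval α R = 0 := by
        rw [hRdef, map_sub, hα, sub_self]
      -- monicize R
      have hlc : R.leadingCoeff = 1 ∨ R.leadingCoeff = -1 := by
        have := hRcoeff R.natDegree
        rw [← Polynomial.coeff_natDegree] at *
        rcases this with h | h | h
        · exact absurd (Polynomial.leadingCoeff_eq_zero.mp h) hR0
        · exact Or.inl h
        · exact Or.inr h
      obtain ⟨S, hSmon, hSdeg, hSα, hSdvd⟩ :
          ∃ S : Polynomial ℤ, S.Monic ∧ S.natDegree ≤ d ∧ Polynomial.aeval α S = 0 ∧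
            ∀ D' : Polynomial ℤ, D' ∣ S → D' ∣ R := by
        rcases hlc with h | h
        · exact ⟨R, h, hRdeg, hRα, fun D' hd => hd⟩
        · refine ⟨-R, ?_, by rwa [Polynomial.natDegree_neg], by rw [map_neg, hRα, neg_zero],
            fun D' hd => (dvd_neg).mp hd⟩
          unfold Polynomial.Monic
          rw [Polynomial.leadingCoeff_neg, h, neg_neg]
      obtain ⟨D', hD'mon, hD'irr, hD'dvd, hD'α⟩ :=
        exists_irreducible_factor_root α S.natDegree S le_rfl hSmon hSα
      have hD'Id : D' ∈ IdPolys d :=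
        ⟨hD'mon, hD'irr, R, ⟨hRdeg, hRcoeff⟩, hR0, hSdvd D' hD'dvd⟩
      have hDD' : D' = D := part1 α D' hD'Id D hD hD'α hDα
      obtain ⟨c, hc⟩ := hSdvd D' hD'dvd
      rw [hDD'] at hc
      have hβR : Polynomial.aeval β R = 0 := by
        rw [hc, map_mul, hDβ, zero_mul]
      rw [hRdef, map_sub, sub_eq_zero] at hβR
      exact hβR
  · -- P(β) = Q(β) → P(α) = Q(α)
    intro hβ
    by_cases hR0 : R = 0
    · have : P = Q := by rwa [hRdef, sub_eq_zero] at hR0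
      rw [this]
    · have hβR : Polynomial.aeval β R = 0 := by
        rw [hRdef, map_sub, hβ, sub_self]
      have hint : IsIntegral ℤ β := ⟨D, hD.1, by rwa [← Polynomial.aeval_def]⟩
      have hDmin : D = minpoly ℤ β := by
        apply Polynomial.map_injective (Int.castRingHom ℚ)
          Int.cast_injective
        rw [← algebraMap_int_eq, ← minpoly.isIntegrallyClosed_eq_field_fractions' ℚ hint]
        have h1 : Irreducible (D.map (algebraMap ℤ ℚ)) := by
          rw [algebraMap_int_eq]; exact hD.2.1
        have h2 : Polynomial.aeval β (D.map (algebraMap ℤ ℚ)) = 0 := by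
          rw [Polynomial.aeval_map_algebraMap]; exact hDβ
        have h3 : (D.map (algebraMap ℤ ℚ)).Monic := hD.1.map _
        exact minpoly.eq_of_irreducible_of_monic h1 h2 h3
      have hDdvd : D ∣ R := hDmin ▸ minpoly.isIntegrallyClosed_dvd hint hβR
      obtain ⟨c, hc⟩ := hDdvd
      have hαR : Polynomial.aeval α R = 0 := by
        rw [hc, map_mul, hDα, zero_mul]
      rw [hRdef, map_sub, sub_eq_zero] at hαR
      exact hαR
end

section
/- Let 0 < ε < 1/2 and C > 1. Then every sufficiently large prime p that is (1/C, ε)-very bad is C-wild. -/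
open Polynomial Filter Asymptotics NumberField

/-- Eventually `log₂ x ≤ x ^ r` for any fixed `r > 0`. -/
lemma aux_logb_le_rpow {r : ℝ} (hr : 0 < r) :
    ∀ᶠ x : ℝ in Filter.atTop, Real.logb 2 x ≤ x ^ r := by
  have hl2 : (0:ℝ) < Real.log 2 := Real.log_pos one_lt_two
  have h := (isLittleO_log_rpow_atTop hr).def hl2
  filter_upwards [h, Filter.eventually_ge_atTop (1:ℝ)] with x hx hx1
  have hx0 : (0:ℝ) ≤ x := by linarith
  rw [Real.norm_eq_abs, Real.norm_eq_abs, abs_of_nonneg (Real.log_nonneg hx1),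
    abs_of_nonneg (Real.rpow_nonneg hx0 r)] at hx
  rw [Real.logb, div_le_iff₀ hl2]
  calc Real.log x ≤ Real.log 2 * x ^ r := hx
    _ = x ^ r * Real.log 2 := by ring

/-- Let `0 < ε < 1/2` and `C > 1`. Then every sufficiently large prime `p` that is
`(1/C, ε)`-very bad is `C`-wild. -/
theorem cWild_of_veryBad (ε C : ℝ) (hε : 0 < ε) (hε' : ε < 1 / 2) (hC : 1 < C) :
    ∃ p₀ : ℕ, ∀ p : ℕ, p₀ ≤ p → p.Prime → VeryBad (1 / C) ε p → CWild C p := by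
  have hev : ∀ᶠ x : ℝ in Filter.atTop,
      1 ≤ Real.logb 2 x ∧ Real.logb 2 x ≤ x ^ (5:ℝ)⁻¹ ∧ Real.logb 2 x ≤ x ^ (ε/2) ∧
      (2:ℝ) ^ ε ≤ x ^ (ε * C / 2) := by
    have h1 := (Real.tendsto_logb_atTop (by norm_num : (1:ℝ) < 2)).eventually_ge_atTop 1
    have h2 := aux_logb_le_rpow (by norm_num : (0:ℝ) < (5:ℝ)⁻¹)
    have h3 := aux_logb_le_rpow (by positivity : (0:ℝ) < ε/2)
    have h4 := (tendsto_rpow_atTop (by positivity : (0:ℝ) < ε * C / 2)).eventually_ge_atTop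
      ((2:ℝ) ^ ε)
    filter_upwards [h1, h2, h3, h4] with x a b c d using ⟨a, b, c, d⟩
  obtain ⟨p₀, hp₀⟩ := Filter.eventually_atTop.mp (tendsto_natCast_atTop_atTop.eventually hev)
  refine ⟨p₀, fun p hpge hp hvb => ?_⟩
  obtain ⟨h1, h2, h3, h4⟩ := hp₀ p hpge
  haveI : Fact p.Prime := ⟨hp⟩
  obtain ⟨x, hx0, hord, hS⟩ := hvb
  set L := Real.logb 2 (p:ℝ) with hLdef
  have hp1 : (1:ℝ) < p := by exact_mod_cast hp.one_lt
  have hp0 : (0:ℝ) < p := by linarith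
  have hL0 : (0:ℝ) < L := lt_of_lt_of_le one_pos h1
  refine ⟨Units.mk0 x hx0, ?_, ?_⟩
  · have hou : orderOf (Units.mk0 x hx0) = orderOf x := by
      rw [← orderOf_units, Units.val_mk0]
    rw [hou]
    have h5 : L ^ 5 ≤ (p:ℝ) := by
      calc L ^ 5 ≤ ((p:ℝ) ^ (5:ℝ)⁻¹) ^ 5 := pow_le_pow_left₀ hL0.le h2 5
        _ = (p:ℝ) := by
          rw [← Real.rpow_natCast ((p:ℝ) ^ (5:ℝ)⁻¹) 5, ← Real.rpow_mul hp0.le]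
          norm_num
    have key : L ^ 2 ≤ Real.sqrt ((p:ℝ) / L) := by
      rw [Real.le_sqrt (by positivity) (by positivity)]
      rw [le_div_iff₀ hL0]
      calc (L ^ 2) ^ 2 * L = L ^ 5 := by ring
        _ ≤ (p:ℝ) := h5
    exact le_trans key hord
  · intro hall
    set d : ℕ := ⌊C * Real.logb 2 (p:ℕ)⌋₊ with hddef
    set K : ℕ := ⌊L ^ C⌋₊ with hKdef
    have hLC0 : (0:ℝ) ≤ L ^ C := Real.rpow_nonneg hL0.le C
    have hd : (d:ℝ) ≤ (1 / (1 / C)) * Real.logb 2 (p:ℕ) := by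
      rw [one_div_one_div]
      exact Nat.floor_le (by positivity)
    have hpow : (2:ℝ) ^ (ε * C * L) = (p:ℝ) ^ (ε * C) := by
      have : (2:ℝ) ^ (L * (ε * C)) = ((2:ℝ) ^ L) ^ (ε * C) := Real.rpow_mul (by norm_num) _ _
      rw [mul_comm (ε * C) L, this, hLdef, Real.rpow_logb (by norm_num) (by norm_num) hp0]
    have hK : (K:ℝ) ≤ (2:ℝ) ^ (ε * (d:ℝ)) := by
      have hfl : (K:ℝ) ≤ L ^ C := Nat.floor_le hLC0
      have hLC : L ^ C ≤ (p:ℝ) ^ (ε * C / 2) := by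
        calc L ^ C ≤ ((p:ℝ) ^ (ε / 2)) ^ C := Real.rpow_le_rpow hL0.le h3 (by linarith)
          _ = (p:ℝ) ^ (ε * C / 2) := by
            rw [← Real.rpow_mul hp0.le]; ring_nf
      have hprod : L ^ C * (2:ℝ) ^ ε ≤ (p:ℝ) ^ (ε * C) := by
        calc L ^ C * (2:ℝ) ^ ε ≤ (p:ℝ) ^ (ε * C / 2) * (p:ℝ) ^ (ε * C / 2) :=
              mul_le_mul hLC h4 (by positivity) (by positivity)
          _ = (p:ℝ) ^ (ε * C) := by rw [← Real.rpow_add hp0]; ring_nf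
      have hd2 : C * L - 1 < (d:ℝ) := by
        have := Nat.sub_one_lt_floor (C * Real.logb 2 (p:ℕ))
        simpa [hddef, hLdef] using this
      have h2e : (2:ℝ) ^ (ε * (C * L - 1)) ≤ (2:ℝ) ^ (ε * (d:ℝ)) := by
        apply Real.rpow_le_rpow_of_exponent_le (by norm_num)
        nlinarith
      calc (K:ℝ) ≤ L ^ C := hfl
        _ ≤ (2:ℝ) ^ (ε * (C * L - 1)) := by
          rw [show ε * (C * L - 1) = ε * C * L + (-ε) by ring, Real.rpow_add (by norm_num),
            hpow, Real.rpow_neg (by norm_num)]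
          calc L ^ C ≤ (p:ℝ) ^ (ε * C) / (2:ℝ) ^ ε :=
                (le_div_iff₀ (by positivity)).mpr hprod
            _ = (p:ℝ) ^ (ε * C) * ((2:ℝ) ^ ε)⁻¹ := by rw [div_eq_mul_inv]
        _ ≤ (2:ℝ) ^ (ε * (d:ℝ)) := h2e
    have hSbound := hS d K hd hK
    -- every residue is in SKvals d K x
    have huniv : (Set.univ : Set (ZMod p)) ⊆ SKvals d K x := by
      intro y _
      obtain ⟨m, hm1, hm2⟩ := hall y
      have hmK : ∀ i ∈ Finset.Icc 1 d, m i ≤ K := by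
        intro i hi
        have hsum : (∑ j ∈ Finset.Icc 1 d, m j) ≤ K := by
          apply Nat.le_floor
          exact_mod_cast hm1
        exact le_trans (Finset.single_le_sum (fun j _ => Nat.zero_le (m j)) hi) hsum
      refine ⟨∑ i ∈ Finset.Icc 1 d, Polynomial.C (m i : ℤ) * Polynomial.X ^ i, ?_, ?_, ?_⟩
      · exact Polynomial.natDegree_sum_le_of_forall_le _ _ fun i hi =>
          le_trans (Polynomial.natDegree_C_mul_X_pow_le _ _) (Finset.mem_Icc.mp hi).2
      · intro j
        rw [Polynomial.finset_sum_coeff]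
        simp only [Polynomial.coeff_C_mul, Polynomial.coeff_X_pow, mul_ite, mul_one, mul_zero]
        rw [Finset.sum_ite_eq (Finset.Icc 1 d) j (fun i => (m i : ℤ))]
        split_ifs with hj
        · rw [abs_of_nonneg (by positivity)]
          exact_mod_cast hmK j hj
        · simp
      · rw [map_sum, hm2]
        refine Finset.sum_congr rfl fun i _ => ?_
        simp [nsmul_eq_mul]
    have hcard : ((SKvals d K x).ncard : ℝ) = (p:ℝ) := by
      have : SKvals d K x = Set.univ := Set.eq_univ_of_univ_subset huniv
      rw [this, Set.ncard_univ, Nat.card_zmod]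
    rw [hcard] at hSbound
    have hlt : (p:ℝ) ^ (1 / C) < (p:ℝ) := by
      have : (p:ℝ) ^ (1 / C) < (p:ℝ) ^ (1:ℝ) :=
        Real.rpow_lt_rpow_of_exponent_lt hp1 (by rw [div_lt_one (by linarith)]; exact hC)
      rwa [Real.rpow_one] at this
    linarith
end
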